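/- There is no lower bound for the map from A_c(T) to the space of o(n) sequences (hence it is not surjective): for every δ > 0 there exists F ∈ B_c(T), not identically zero, such that sup_{n∈ℤ} |f̂(n)|/(|n| + 1) < δ · ‖f‖_T, where f̂(n) = (−1)^n F(π) + i n ∫_{−π}^{π} F(t) e^{−int} dt and ‖f‖_T = sup{ |F(β) − F(α)| : α ≤ β ≤ α + 2π }. -/

import Mathlib

open MeasureTheory Real

/-- Fourier coefficient of `f = F'` in terms of the primitive `F ∈ B_c(𝕋)`. -/
noncomputable def fourierCoefPrim (F : ℝ → ℂ) (n : ℤ) : ℂ :=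
  (-1 : ℂ) ^ n * F π + Complex.I * (n : ℂ) *
    ∫ t in (-π)..π, F t * Complex.exp (-Complex.I * (n : ℂ) * (t : ℂ))

/-- The Alexiewicz norm of `f = F'` expressed via the primitive. -/
noncomputable def alexNormPrim (F : ℝ → ℂ) : ℝ :=
  sSup {r : ℝ | ∃ α β : ℝ, α ≤ β ∧ β ≤ α + 2 * π ∧ r = ‖F β - F α‖}

private lemma aux_exp_int (m : ℤ) :
    (∫ t in (-π : ℝ)..π, Complex.exp (Complex.I * m * t)) =
      if m = 0 then (2 * (π:ℂ)) else 0 := by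
  rcases eq_or_ne m 0 with h | h
  · simp only [h, Int.cast_zero, mul_zero, zero_mul, Complex.exp_zero, if_pos]
    rw [intervalIntegral.integral_const]
    rw [Complex.real_smul]
    push_cast
    ring
  · rw [if_neg h]
    have hc : (Complex.I * m : ℂ) ≠ 0 :=
      mul_ne_zero Complex.I_ne_zero (Int.cast_ne_zero.mpr h)
    rw [integral_exp_mul_complex hc]
    have e1 : Complex.exp (Complex.I * m * (π:ℝ)) = (-1 : ℂ) ^ m := by
      rw [show (Complex.I * (m:ℂ) * ((π:ℝ):ℂ) : ℂ) = (m : ℤ) * ((π:ℂ) * Complex.I) by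
        push_cast; ring, Complex.exp_int_mul, Complex.exp_pi_mul_I]
    have e2 : Complex.exp (Complex.I * m * ((-π : ℝ):ℂ)) = (-1 : ℂ) ^ (-m) := by
      rw [show (Complex.I * (m:ℂ) * ((-π:ℝ):ℂ) : ℂ) = ((-m : ℤ):ℂ) * ((π:ℂ) * Complex.I) by
        push_cast; ring, Complex.exp_int_mul, Complex.exp_pi_mul_I]
    rw [e1, e2]
    have : ((-1:ℂ)) ^ (-m) = (-1:ℂ) ^ m := by
      rw [zpow_neg, ← inv_zpow, inv_neg, inv_one]
    rw [this, sub_self, zero_div]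

private lemma aux_cont (m : ℤ) : Continuous fun t:ℝ => Complex.exp (Complex.I * m * t) := by
  fun_prop

private lemma aux_sin_int (N : ℕ) (n : ℤ) :
    (∫ t in (-π:ℝ)..π, (Real.sin (N * t) : ℂ) * Complex.exp (-Complex.I * n * t))
      = Complex.I / 2 * ((if (-(N:ℤ) - n : ℤ) = 0 then (2*(π:ℂ)) else 0)
          - (if ((N:ℤ) - n : ℤ) = 0 then (2*(π:ℂ)) else 0)) := by
  have key : ∀ t:ℝ, (Real.sin (N*t) : ℂ) * Complex.exp (-Complex.I * n * t)
      = Complex.I/2 * Complex.exp (Complex.I * ((-(N:ℤ) - n : ℤ)) * t)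
        - Complex.I/2 * Complex.exp (Complex.I * (((N:ℤ) - n : ℤ)) * t) := by
    intro t
    rw [Complex.ofReal_sin]
    push_cast
    rw [Complex.sin]
    have h1 : Complex.exp (-((N:ℂ) * t) * Complex.I) * Complex.exp (-Complex.I * n * t)
        = Complex.exp (Complex.I * (-(N:ℂ) - (n:ℂ)) * t) := by
      rw [← Complex.exp_add]; congr 1; ring
    have h2 : Complex.exp (((N:ℂ) * t) * Complex.I) * Complex.exp (-Complex.I * n * t)
        = Complex.exp (Complex.I * ((N:ℂ) - (n:ℂ)) * t) := by
      rw [← Complex.exp_add]; congr 1; ring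
    rw [← h1, ← h2]
    ring
  simp only [key]
  rw [intervalIntegral.integral_sub
      (f := fun t:ℝ => Complex.I/2 * Complex.exp (Complex.I * ((-(N:ℤ) - n : ℤ):ℂ) * t))
      (g := fun t:ℝ => Complex.I/2 * Complex.exp (Complex.I * (((N:ℤ) - n : ℤ):ℂ) * t))
      ((continuous_const.mul (aux_cont _)).intervalIntegrable _ _)
      ((continuous_const.mul (aux_cont _)).intervalIntegrable _ _),
    intervalIntegral.integral_const_mul, intervalIntegral.integral_const_mul,
    aux_exp_int, aux_exp_int]
  ring

private lemma aux_abs_le (N : ℕ) (n : ℤ) :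
    ‖∫ t in (-π:ℝ)..π, (Real.sin (N * t) : ℂ)
      * Complex.exp (-Complex.I * n * t)‖ ≤ π := by
  rw [aux_sin_int]
  have hπ := pi_pos
  split_ifs <;>
    simp [norm_mul, norm_div, Complex.norm_I, Complex.norm_real,
      abs_of_pos hπ] <;> linarith

private lemma aux_eq_zero (N : ℕ) (n : ℤ) (h1 : n ≠ (N:ℤ)) (h2 : n ≠ -(N:ℤ)) :
    (∫ t in (-π:ℝ)..π, (Real.sin (N * t) : ℂ)
      * Complex.exp (-Complex.I * n * t)) = 0 := by
  rw [aux_sin_int, if_neg (by omega), if_neg (by omega)]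
  ring

private lemma aux_sum_abs (K : ℕ) (n : ℤ) :
    ‖∑ j ∈ Finset.range K, ∫ t in (-π:ℝ)..π,
      (Real.sin ((4*j+1 : ℕ) * t) : ℂ) * Complex.exp (-Complex.I * n * t)‖ ≤ π := by
  by_cases hex : ∃ j ∈ Finset.range K, (n = ((4*j+1 : ℕ):ℤ) ∨ n = -((4*j+1 : ℕ):ℤ))
  · obtain ⟨j₀, hj₀, hcase⟩ := hex
    rw [Finset.sum_eq_single_of_mem j₀ hj₀ (fun j _ hne => by
      apply aux_eq_zero <;> push_cast <;> push_cast at hcase <;> omega)]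
    exact aux_abs_le _ _
  · push_neg at hex
    rw [Finset.sum_eq_zero (fun j hj => by
      apply aux_eq_zero <;> have := hex j hj <;> tauto)]
    simpa using pi_pos.le

private noncomputable def realF (K : ℕ) (x : ℝ) : ℝ :=
  (K:ℝ)⁻¹ * ∑ j ∈ Finset.range K, Real.sin ((4*j+1 : ℕ) * x)

private lemma realF_cont (K : ℕ) : Continuous (realF K) := by
  unfold realF; fun_prop

private lemma sin_term_pi (N : ℕ) : Real.sin ((N:ℝ) * π) = 0 := by
  have := Real.sin_int_mul_pi (N : ℤ)
  push_cast at this; exact this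

private lemma sin_term_negpi (N : ℕ) : Real.sin ((N:ℝ) * (-π)) = 0 := by
  have := Real.sin_int_mul_pi (-(N : ℤ))
  push_cast at this
  rw [show (N:ℝ) * (-π) = -(N:ℝ) * π by ring]
  exact this

private lemma realF_pi (K : ℕ) : realF K π = 0 := by
  unfold realF
  rw [Finset.sum_eq_zero (fun j _ => sin_term_pi _), mul_zero]

private lemma realF_negpi (K : ℕ) : realF K (-π) = 0 := by
  unfold realF
  rw [Finset.sum_eq_zero (fun j _ => sin_term_negpi _), mul_zero]

private lemma realF_per (K : ℕ) (x : ℝ) : realF K (x + 2*π) = realF K x := by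
  unfold realF
  congr 1
  apply Finset.sum_congr rfl
  intro j _
  have := Real.sin_add_int_mul_two_pi (((4*j+1:ℕ):ℝ) * x) ((4*j+1 : ℕ) : ℤ)
  rw [show ((4*j+1:ℕ):ℝ) * (x + 2*π) = ((4*j+1:ℕ):ℝ) * x + (((4*j+1:ℕ):ℤ):ℝ) * (2*π) by
    push_cast; ring]
  exact this

private lemma realF_half (K : ℕ) (hK : 0 < K) : realF K (π/2) = 1 := by
  unfold realF
  rw [Finset.sum_congr rfl (fun j _ => show Real.sin (((4*j+1:ℕ):ℝ) * (π/2)) = 1 by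
    rw [show ((4*j+1:ℕ):ℝ) * (π/2) = π/2 + ((j:ℤ):ℝ) * (2*π) by push_cast; ring,
      Real.sin_add_int_mul_two_pi, Real.sin_pi_div_two])]
  rw [Finset.sum_const, Finset.card_range, nsmul_eq_mul, mul_one,
    inv_mul_cancel₀ (by exact_mod_cast hK.ne')]

private lemma realF_abs_le (K : ℕ) (x : ℝ) : |realF K x| ≤ 1 := by
  unfold realF
  rcases Nat.eq_zero_or_pos K with h | h
  · simp [h]
  calc |(K:ℝ)⁻¹ * ∑ j ∈ Finset.range K, Real.sin ((4*j+1 : ℕ) * x)|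
      = (K:ℝ)⁻¹ * |∑ j ∈ Finset.range K, Real.sin ((4*j+1 : ℕ) * x)| := by
        rw [abs_mul, abs_of_nonneg (by positivity)]
    _ ≤ (K:ℝ)⁻¹ * ∑ j ∈ Finset.range K, |Real.sin ((4*j+1 : ℕ) * x)| := by
        gcongr; exact Finset.abs_sum_le_sum_abs _ _
    _ ≤ (K:ℝ)⁻¹ * ∑ j ∈ Finset.range K, (1:ℝ) := by
        gcongr with j hj; exact Real.abs_sin_le_one _
    _ = 1 := by
        rw [Finset.sum_const, Finset.card_range, nsmul_eq_mul, mul_one,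
          inv_mul_cancel₀ (by exact_mod_cast h.ne')]

private lemma realF_int (K : ℕ) (n : ℤ) :
    (∫ t in (-π:ℝ)..π, ((realF K t : ℝ):ℂ) * Complex.exp (-Complex.I * n * t))
      = (K:ℂ)⁻¹ * ∑ j ∈ Finset.range K, ∫ t in (-π:ℝ)..π,
          (Real.sin ((4*j+1 : ℕ) * t) : ℂ) * Complex.exp (-Complex.I * n * t) := by
  have key : ∀ t : ℝ, ((realF K t : ℝ):ℂ) * Complex.exp (-Complex.I * n * t)
      = (K:ℂ)⁻¹ * ∑ j ∈ Finset.range K,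
          (Real.sin ((4*j+1 : ℕ) * t) : ℂ) * Complex.exp (-Complex.I * n * t) := by
    intro t
    unfold realF
    push_cast
    rw [mul_assoc, Finset.sum_mul]
  simp only [key]
  rw [intervalIntegral.integral_const_mul,
    intervalIntegral.integral_finset_sum (fun j _ => by
      apply Continuous.intervalIntegrable; fun_prop)]

/-- There is no lower bound for `f ↦ f̂` from `A_c(𝕋)` into the
space `d` of `o(n)` sequences: for every `δ > 0` there is a nonzero
`F ∈ B_c(𝕋)` with `‖f̂‖_d < δ ‖f‖_𝕋`. -/
theorem fourier_map_no_lower_bound :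
    ∀ δ > (0 : ℝ), ∃ F : ℝ → ℂ,
      (Continuous F ∧ F (-π) = 0 ∧ ∀ x : ℝ, F (x + 2 * π) = F x + F π)
      ∧ (∃ x : ℝ, F x ≠ 0)
      ∧ (⨆ n : ℤ, ‖fourierCoefPrim F n‖ / (|(n : ℝ)| + 1))
          < δ * alexNormPrim F := by
  intro δ hδ
  obtain ⟨K, hK⟩ := exists_nat_gt (π / δ)
  have hKR : (0:ℝ) < K := lt_trans (div_pos pi_pos hδ) hK
  have hKpos : 0 < K := by exact_mod_cast hKR
  have hπK : π / K < δ := by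
    rw [div_lt_iff₀ hKR]
    calc π = (π/δ) * δ := by field_simp
    _ < (K:ℝ) * δ := by gcongr
    _ = δ * K := mul_comm _ _
  refine ⟨fun x => ((realF K x : ℝ) : ℂ), ⟨?_, ?_, ?_⟩, ⟨π/2, ?_⟩, ?_⟩
  · exact Complex.continuous_ofReal.comp (realF_cont K)
  · show ((realF K (-π) : ℝ) : ℂ) = 0
    rw [realF_negpi]; simp
  · intro x
    show ((realF K (x + 2*π) : ℝ) : ℂ) = ((realF K x : ℝ) : ℂ) + ((realF K π : ℝ) : ℂ)
    rw [realF_per, realF_pi]; simp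
  · show ((realF K (π/2) : ℝ) : ℂ) ≠ 0
    rw [realF_half K hKpos]; norm_num
  · set F : ℝ → ℂ := fun x => ((realF K x : ℝ) : ℂ) with hF
    have hFabs : ∀ x, ‖F x‖ ≤ 1 := by
      intro x
      rw [hF]
      simpa using realF_abs_le K x
    have halex : 1 ≤ alexNormPrim F := by
      apply le_csSup
      · refine ⟨2, ?_⟩
        rintro r ⟨α, β, _, _, rfl⟩
        calc ‖F β - F α‖ ≤ ‖F β‖ + ‖F α‖ :=
              norm_sub_le _ _
          _ ≤ 1 + 1 := add_le_add (hFabs β) (hFabs α)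
          _ = 2 := by norm_num
      · refine ⟨-π, π/2, by linarith [pi_pos], by linarith [pi_pos], ?_⟩
        rw [hF]
        simp [realF_negpi, realF_half K hKpos]
    have hcoef : ∀ n : ℤ, ‖fourierCoefPrim F n‖ / (|(n:ℝ)| + 1) ≤ π / K := by
      intro n
      have hval : fourierCoefPrim F n = Complex.I * n * ((K:ℂ)⁻¹
          * ∑ j ∈ Finset.range K, ∫ t in (-π:ℝ)..π,
            (Real.sin ((4*j+1 : ℕ) * t) : ℂ) * Complex.exp (-Complex.I * n * t)) := by
        unfold fourierCoefPrim
        have h0 : F π = 0 := by rw [hF]; simp [realF_pi]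
        rw [h0, mul_zero, zero_add]
        congr 1
        exact realF_int K n
      have h1 : ‖fourierCoefPrim F n‖ ≤ |(n:ℝ)| * (π / K) := by
        rw [hval]
        rw [norm_mul, norm_mul, norm_mul, Complex.norm_I, one_mul, norm_inv,
          Complex.norm_natCast, Complex.norm_intCast]
        calc |(n:ℝ)| * ((K:ℝ)⁻¹ * ‖_‖) ≤ |(n:ℝ)| * ((K:ℝ)⁻¹ * π) := by
              gcongr
              exact aux_sum_abs K n
          _ = |(n:ℝ)| * (π / K) := by ring
      have hpos : (0:ℝ) < |(n:ℝ)| + 1 := by positivity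
      rw [div_le_iff₀ hpos]
      have h2 : |(n:ℝ)| * (π / K) ≤ (π / K) * (|(n:ℝ)| + 1) := by
        have hπK0 : (0:ℝ) ≤ π / K := by positivity
        nlinarith [abs_nonneg ((n:ℝ))]
      linarith
    calc (⨆ n : ℤ, ‖fourierCoefPrim F n‖ / (|(n : ℝ)| + 1)) ≤ π / K :=
          ciSup_le hcoef
      _ < δ := hπK
      _ ≤ δ * alexNormPrim F := le_mul_of_one_le_right hδ.le halex
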